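/- Let r : R → ℤ be a non-archimedean function on a root system, k₀(α) = (r_m(α) − r(α))/2 ∈ (1/2)ℤ, and k₁ = ⌈k₀⌉ (pointwise ceiling, an integer-valued function). Then k₁ also satisfies: (1) k₁(α) + k₁(−α) ≥ r_m(α) − r(α) for all α ∈ R, and (2) k₁(α) + k₁(β) − k₁(α+β) ≥ r(α+β) − min{r(α), r(β)} whenever α, β, α+β ∈ R. -/

import Mathlib

variable {V : Type*} [NormedAddCommGroup V] [InnerProductSpace ℝ V] [DecidableEq V]

/-- A (crystallographic) root system, encoded as a finite subset of a real inner
product space: it does not contain `0`, is symmetric, is stable under the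
reflections in its elements, and satisfies the integrality condition. -/
def IsCrystRootSet (R : Finset V) : Prop :=
  (0 : V) ∉ R ∧ (∀ α ∈ R, -α ∈ R) ∧
  (∀ α ∈ R, ∀ β ∈ R, β - (2 * (inner ℝ β α : ℝ) / (inner ℝ α α : ℝ)) • α ∈ R) ∧
  (∀ α ∈ R, ∀ β ∈ R, ∃ z : ℤ, 2 * (inner ℝ β α : ℝ) = z * (inner ℝ α α : ℝ))

/-- Two roots are strongly orthogonal if neither their sum nor their difference
lies in `R ∪ {0}`. -/
def StronglyOrthogonal (R : Finset V) (α β : V) : Prop :=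
  α + β ∉ R ∧ α - β ∉ R ∧ α + β ≠ 0 ∧ α - β ≠ 0

instance (R : Finset V) (α β : V) : Decidable (StronglyOrthogonal R α β) :=
  inferInstanceAs (Decidable (α + β ∉ R ∧ α - β ∉ R ∧ α + β ≠ 0 ∧ α - β ≠ 0))

/-- `perp R S` is the set of roots strongly orthogonal to every root of `S`. -/
def perp (R : Finset V) (S : Finset V) : Finset V :=
  R.filter fun β => ∀ α ∈ S, StronglyOrthogonal R α β

/-- A function `r : R → ℤ` on a root system is non-archimedean if it is even and
satisfies the ultrametric inequality. -/
def NonArch (R : Finset V) (r : V → ℤ) : Prop :=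
  (∀ α ∈ R, r (-α) = r α) ∧
  ∀ α ∈ R, ∀ β ∈ R, α + β ∈ R → min (r α) (r β) ≤ r (α + β)

/-- `rm R r α` is the maximum of `r β` over the roots `β` not strongly
orthogonal to `α` (for `α ∈ R` this set contains `α` itself, so is nonempty). -/
def rm (R : Finset V) (r : V → ℤ) (α : V) : ℤ :=
  WithBot.unbotD (r α)
    (((R.filter fun β => ¬ StronglyOrthogonal R α β).image r).max)

/-- `k₁(α) = ⌈(r_m(α) − r(α))/2⌉` -/
def k1 (R : Finset V) (r : V → ℤ) (α : V) : ℤ :=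
  ⌈((rm R r α - r α : ℤ) : ℚ) / 2⌉

section Aux

variable {V : Type*} [NormedAddCommGroup V] [InnerProductSpace ℝ V] [DecidableEq V]

lemma inner_self_pos' {x : V} (hx : x ≠ 0) : (0:ℝ) < inner ℝ x x := by
  have h : (inner ℝ x x : ℝ) ≠ 0 := fun h => hx (inner_self_eq_zero.1 h)
  exact real_inner_self_nonneg.lt_of_ne (Ne.symm h)

/-- Key root-system fact: if two roots have positive inner ℝ product, their
difference is a root or zero. -/
lemma sub_mem_of_inner_pos {R : Finset V} (hR : IsCrystRootSet R) {x y : V}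
    (hx : x ∈ R) (hy : y ∈ R) (h : (0:ℝ) < inner ℝ x y) : x - y ∈ R ∨ x = y := by
  obtain ⟨h0, hsym, hrefl, hint⟩ := hR
  have hxx : (0:ℝ) < inner ℝ x x := inner_self_pos' (fun hh => h0 (hh ▸ hx))
  have hyy : (0:ℝ) < inner ℝ y y := inner_self_pos' (fun hh => h0 (hh ▸ hy))
  obtain ⟨n, hn⟩ := hint y hy x hx
  obtain ⟨m, hm⟩ := hint x hx y hy
  rw [real_inner_comm x y] at hm
  have hnpos : 0 < n := by
    by_contra hc
    push_neg at hc
    have h1 : ((n:ℝ)) * inner ℝ y y ≤ 0 :=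
      mul_nonpos_of_nonpos_of_nonneg (by exact_mod_cast hc) hyy.le
    linarith
  have hmpos : 0 < m := by
    by_contra hc
    push_neg at hc
    have h1 : ((m:ℝ)) * inner ℝ x x ≤ 0 :=
      mul_nonpos_of_nonpos_of_nonneg (by exact_mod_cast hc) hxx.le
    linarith
  rcases eq_or_lt_of_le (by omega : (1:ℤ) ≤ n) with hn1 | hn2
  · -- n = 1 : reflect x in y
    left
    have hr := hrefl y hy x hx
    have hcoef : 2 * (inner ℝ x y : ℝ) / (inner ℝ y y : ℝ) = 1 := by
      rw [hn, ← hn1]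
      field_simp
      norm_num
    rw [hcoef, one_smul] at hr
    exact hr
  rcases eq_or_lt_of_le (by omega : (1:ℤ) ≤ m) with hm1 | hm2
  · -- m = 1 : reflect y in x
    left
    have hr := hrefl x hx y hy
    have hcoef : 2 * (inner ℝ y x : ℝ) / (inner ℝ x x : ℝ) = 1 := by
      rw [real_inner_comm x y, hm, ← hm1]
      field_simp
      norm_num
    rw [hcoef, one_smul] at hr
    have := hsym _ hr
    rw [neg_sub] at this
    exact this
  -- n ≥ 2 and m ≥ 2 : then x = y
  right
  have hcs := real_inner_mul_inner_self_le x y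
  have hprod : ((n:ℝ)) * m * (inner ℝ y y * inner ℝ x x) = 4 * (inner ℝ x y * inner ℝ x y) := by
    linear_combination (-((m:ℝ) * inner ℝ x x)) * hn + (-(2 * (inner ℝ x y : ℝ))) * hm
  have hnm4 : ((n:ℝ)) * m ≤ 4 := by
    have hpos : (0:ℝ) < inner ℝ y y * inner ℝ x x := mul_pos hyy hxx
    have h1 : ((n:ℝ)) * m * (inner ℝ y y * inner ℝ x x) ≤ 4 * (inner ℝ y y * inner ℝ x x) := by
      nlinarith [hcs]
    exact le_of_mul_le_mul_right h1 hpos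
  have hnm4' : n * m ≤ 4 := by exact_mod_cast hnm4
  have hn2' : 2 ≤ n := hn2
  have hm2' : 2 ≤ m := hm2
  have hneq : n = 2 := by nlinarith
  have hmeq : m = 2 := by nlinarith
  have hxy_yy : (inner ℝ x y : ℝ) = inner ℝ y y := by rw [hneq] at hn; push_cast at hn; linarith
  have hxy_xx : (inner ℝ x y : ℝ) = inner ℝ x x := by rw [hmeq] at hm; push_cast at hm; linarith
  have hz : (inner ℝ (x - y) (x - y) : ℝ) = 0 := by
    have e1 : (inner ℝ (x - y) (x - y) : ℝ) =
        inner ℝ x x - inner ℝ y x - (inner ℝ x y - inner ℝ y y) := by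
      rw [inner_sub_left, inner_sub_right, inner_sub_right]
      ring
    rw [e1, real_inner_comm x y]
    linarith
  have := inner_self_eq_zero.1 hz
  exact sub_eq_zero.1 this

lemma add_mem_of_inner_neg {R : Finset V} (hR : IsCrystRootSet R) {x y : V}
    (hx : x ∈ R) (hy : y ∈ R) (h : (inner ℝ x y : ℝ) < 0) : x + y ∈ R ∨ x + y = 0 := by
  have hy' : -y ∈ R := hR.2.1 y hy
  have h' : (0:ℝ) < inner ℝ x (-y) := by rw [inner_neg_right]; linarith
  rcases sub_mem_of_inner_pos hR hx hy' h' with h1 | h1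
  · left; rwa [sub_neg_eq_add] at h1
  · right; rw [h1]; abel

/-- Strongly orthogonal roots are orthogonal. -/
lemma inner_eq_zero_of_so {R : Finset V} (hR : IsCrystRootSet R) {x y : V}
    (hx : x ∈ R) (hy : y ∈ R) (h : StronglyOrthogonal R x y) : (inner ℝ x y : ℝ) = 0 := by
  obtain ⟨h1, h2, h3, h4⟩ := h
  rcases lt_trichotomy (inner ℝ x y : ℝ) 0 with hlt | heq | hgt
  · rcases add_mem_of_inner_neg hR hx hy hlt with hh | hh
    · exact absurd hh h1
    · exact absurd hh h3
  · exact heq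
  · rcases sub_mem_of_inner_pos hR hx hy hgt with hh | hh
    · exact absurd hh h2
    · exact absurd (by rw [hh, sub_self]) h4

lemma so_neg_right {R : Finset V} {x y : V} :
    StronglyOrthogonal R x (-y) ↔ StronglyOrthogonal R x y := by
  unfold StronglyOrthogonal
  rw [show x + -y = x - y by abel, show x - -y = x + y by abel]
  tauto

lemma so_neg_left {R : Finset V} (hsym : ∀ a ∈ R, -a ∈ R) {x y : V} :
    StronglyOrthogonal R (-x) y ↔ StronglyOrthogonal R x y := by
  have key : ∀ a b : V, StronglyOrthogonal R a b → StronglyOrthogonal R (-a) b := by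
    rintro a b ⟨h1, h2, h3, h4⟩
    refine ⟨?_, ?_, ?_, ?_⟩
    · intro hh
      apply h2
      have e : a - b = -(-a + b) := by abel
      rw [e]; exact hsym _ hh
    · intro hh
      apply h1
      have e : a + b = -(-a - b) := by abel
      rw [e]; exact hsym _ hh
    · intro hh
      apply h4
      have e : a - b = -(-a + b) := by abel
      rw [e, hh, neg_zero]
    · intro hh
      apply h3
      have e : a + b = -(-a - b) := by abel
      rw [e, hh, neg_zero]
  constructor
  · intro h
    have := key _ _ h
    rwa [neg_neg] at this
  · exact key x y

/-- The set over which the max in `rm` is taken. -/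
lemma le_rm {R : Finset V} (r : V → ℤ) {α δ : V} (hδ : δ ∈ R)
    (h : ¬ StronglyOrthogonal R α δ) : r δ ≤ rm R r α := by
  classical
  set t := (R.filter fun β => ¬ StronglyOrthogonal R α β).image r with ht
  have hmem : r δ ∈ t := Finset.mem_image_of_mem r (Finset.mem_filter.2 ⟨hδ, h⟩)
  have hle := Finset.le_max hmem
  rcases hmax : t.max with _ | m
  · rw [hmax] at hle
    exact absurd hle (WithBot.not_coe_le_bot _)
  · rw [hmax] at hle
    have he : rm R r α = m := by rw [rm, ← ht, hmax]; rfl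
    rw [he]
    exact WithBot.coe_le_coe.1 hle

lemma not_so_self {R : Finset V} {α : V} : ¬ StronglyOrthogonal R α α :=
  fun h => h.2.2.2 (sub_self α)

lemma rm_exists {R : Finset V} (r : V → ℤ) {α : V} (hα : α ∈ R) :
    ∃ δ ∈ R, ¬ StronglyOrthogonal R α δ ∧ r δ = rm R r α := by
  classical
  set s := R.filter fun β => ¬ StronglyOrthogonal R α β with hs
  have hne : s.Nonempty := ⟨α, Finset.mem_filter.2 ⟨hα, not_so_self⟩⟩
  obtain ⟨m, hm⟩ := (s.image r).max_of_nonempty (hne.image r)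
  obtain ⟨δ, hδ, hδm⟩ := Finset.mem_image.1 (Finset.mem_of_max hm)
  obtain ⟨hδR, hδso⟩ := Finset.mem_filter.1 hδ
  refine ⟨δ, hδR, hδso, ?_⟩
  rw [rm, ← hs, hm, hδm]
  rfl

lemma rm_neg {R : Finset V} (hR : IsCrystRootSet R) (r : V → ℤ) (hna : NonArch R r)
    {α : V} (hα : α ∈ R) : rm R r (-α) = rm R r α := by
  have hfil : (R.filter fun β => ¬ StronglyOrthogonal R (-α) β) =
      R.filter fun β => ¬ StronglyOrthogonal R α β :=
    Finset.filter_congr fun β _ => by rw [so_neg_left hR.2.1]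
  rw [rm, rm, hfil, hna.1 α hα]

/-- The main combination step: a root not strongly orthogonal to `α + β` is not
strongly orthogonal to `α` or to `β`. -/
lemma not_so_sum {R : Finset V} (hR : IsCrystRootSet R) {α β δ : V}
    (hα : α ∈ R) (hβ : β ∈ R) (hγ : α + β ∈ R) (hδ : δ ∈ R)
    (h : ¬ StronglyOrthogonal R (α + β) δ) :
    ¬ StronglyOrthogonal R α δ ∨ ¬ StronglyOrthogonal R β δ := by
  have hsym := hR.2.1
  -- main case, for δ with α + β + δ ∈ R
  have main : ∀ δ' ∈ R, α + β + δ' ∈ R →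
      ¬ StronglyOrthogonal R α δ' ∨ ¬ StronglyOrthogonal R β δ' := by
    intro δ' hδ' hε
    by_contra hc
    push_neg at hc
    obtain ⟨hsoα, hsoβ⟩ := hc
    have hiα : (inner ℝ α δ' : ℝ) = 0 := inner_eq_zero_of_so hR hα hδ' hsoα
    have hiβ : (inner ℝ β δ' : ℝ) = 0 := inner_eq_zero_of_so hR hβ hδ' hsoβ
    have hγ0 : (α + β : V) ≠ 0 := fun hh => hR.1 (hh ▸ hγ)
    have hγγ : (0:ℝ) < inner ℝ (α + β) (α + β) := inner_self_pos' hγ0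
    have hsplit : (0:ℝ) < inner ℝ (α + β) α ∨ (0:ℝ) < inner ℝ (α + β) β := by
      by_contra hcc
      push_neg at hcc
      have : (inner ℝ (α+β) (α+β) : ℝ) = inner ℝ (α+β) α + inner ℝ (α+β) β := by
        rw [inner_add_right]
      linarith [hcc.1, hcc.2]
    rcases hsplit with hpos | hpos
    · -- inner ℝ (α+β+δ') α > 0, so (α+β+δ') - α = β + δ' ∈ R ∪ {0}
      have hεα : (0:ℝ) < inner ℝ (α + β + δ') α := by
        rw [inner_add_left, real_inner_comm α δ', hiα]
        linarith
      rcases sub_mem_of_inner_pos hR hε hα hεα with hh | hh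
      · have e : α + β + δ' - α = β + δ' := by abel
        rw [e] at hh
        exact hsoβ.1 hh
      · have e : β + δ' = 0 := by
          have := sub_eq_zero.2 hh
          have e2 : α + β + δ' - α = β + δ' := by abel
          rwa [e2] at this
        exact hsoβ.2.2.1 e
    · have hεβ : (0:ℝ) < inner ℝ (α + β + δ') β := by
        rw [inner_add_left, real_inner_comm β δ', hiβ]
        linarith
      rcases sub_mem_of_inner_pos hR hε hβ hεβ with hh | hh
      · have e : α + β + δ' - β = α + δ' := by abel
        rw [e] at hh
        exact hsoα.1 hh
      · have e : α + δ' = 0 := by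
          have := sub_eq_zero.2 hh
          have e2 : α + β + δ' - β = α + δ' := by abel
          rwa [e2] at this
        exact hsoα.2.2.1 e
  have h' : (α + β + δ ∈ R) ∨ (α + β - δ ∈ R) ∨ (α + β + δ = 0) ∨ (α + β - δ = 0) := by
    by_contra hc
    push_neg at hc
    exact h ⟨hc.1, hc.2.1, hc.2.2.1, hc.2.2.2⟩
  rcases h' with hh | hh | hh | hh
  · exact main δ hδ hh
  · have hδ' : -δ ∈ R := hsym δ hδ
    have hh' : α + β + -δ ∈ R := by rwa [← sub_eq_add_neg]
    rcases main (-δ) hδ' hh' with hres | hres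
    · left; rwa [so_neg_right] at hres
    · right; rwa [so_neg_right] at hres
  · -- δ = -(α+β) ; then α + δ = -β ∈ R
    left
    intro hso
    apply hso.1
    have e : α + δ = -β := by
      have : δ = -(α + β) := by
        have := hh
        linear_combination (norm := abel) this
      rw [this]; abel
    rw [e]
    exact hsym β hβ
  · -- δ = α+β ; then α - δ = -β ∈ R
    left
    intro hso
    apply hso.2.1
    have e : α - δ = -β := by
      have : δ = α + β := by linear_combination (norm := abel) -hh
      rw [this]; abel
    rw [e]
    exact hsym β hβ

lemma ceil_half_bounds (d : ℤ) :
    d ≤ 2 * ⌈((d:ℚ)) / 2⌉ ∧ 2 * ⌈((d:ℚ)) / 2⌉ ≤ d + 1 := by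
  constructor
  · have := Int.le_ceil ((d:ℚ)/2)
    have h2 : (d:ℚ) ≤ 2*⌈((d:ℚ))/2⌉ := by linarith
    exact_mod_cast h2
  · have := Int.ceil_lt_add_one ((d:ℚ)/2)
    have h2 : (2*⌈((d:ℚ))/2⌉ : ℚ) < d + 2 := by linarith
    have h3 : 2*⌈((d:ℚ))/2⌉ < d + 2 := by exact_mod_cast h2
    omega

end Aux

section Key

variable {V : Type*} [NormedAddCommGroup V] [InnerProductSpace ℝ V] [DecidableEq V]

lemma rm_key {R : Finset V} (hR : IsCrystRootSet R) (r : V → ℤ) (hna : NonArch R r)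
    {α β : V} (hα : α ∈ R) (hβ : β ∈ R) (hγ : α + β ∈ R) :
    rm R r (α + β) + r (α + β) + r α + r β - 2 * min (r α) (r β) ≤
      rm R r α + rm R r β := by
  have hsym := hR.2.1
  obtain ⟨δ, hδR, hδso, hδval⟩ := rm_exists r hγ
  have hba : r α ≤ rm R r β := le_rm r hα (fun hso => hso.1 (by rwa [add_comm]))
  have hbb : r β ≤ rm R r β := le_rm r hβ not_so_self
  have hbc : r (α + β) ≤ rm R r β := by
    refine le_rm r hγ (fun hso => hso.2.1 ?_)
    have e : β - (α + β) = -α := by abel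
    rw [e]; exact hsym α hα
  have hab : r β ≤ rm R r α := le_rm r hβ (fun hso => hso.1 hγ)
  have haa : r α ≤ rm R r α := le_rm r hα not_so_self
  have hac : r (α + β) ≤ rm R r α := by
    refine le_rm r hγ (fun hso => hso.2.1 ?_)
    have e : α - (α + β) = -β := by abel
    rw [e]; exact hsym β hβ
  have hra : min (r (α + β)) (r β) ≤ r α := by
    have e : (α + β) + -β = α := by abel
    have := hna.2 (α + β) hγ (-β) (hsym β hβ) (by rw [e]; exact hα)
    rwa [e, hna.1 β hβ] at this
  have hrb : min (r (α + β)) (r α) ≤ r β := by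
    have e : (α + β) + -α = β := by abel
    have := hna.2 (α + β) hγ (-α) (hsym α hα) (by rw [e]; exact hβ)
    rwa [e, hna.1 α hα] at this
  rcases not_so_sum hR hα hβ hγ hδR hδso with h | h
  · have h1 : rm R r (α + β) ≤ rm R r α := hδval ▸ le_rm r hδR h
    omega
  · have h1 : rm R r (α + β) ≤ rm R r β := hδval ▸ le_rm r hδR h
    omega

end Key

/-- The integer-valued ceiling `k₁` of `k₀` still satisfies the two conditions
characterizing root valuation lattices. -/
theorem k1_conditions (R : Finset V) (hR : IsCrystRootSet R) (r : V → ℤ)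
    (hna : NonArch R r) :
    (∀ α ∈ R, rm R r α - r α ≤ k1 R r α + k1 R r (-α)) ∧
    (∀ α ∈ R, ∀ β ∈ R, α + β ∈ R →
      r (α + β) - min (r α) (r β) ≤ k1 R r α + k1 R r β - k1 R r (α + β)) := by
  constructor
  · intro α hα
    have hk : k1 R r (-α) = k1 R r α := by
      rw [k1, k1, rm_neg hR r hna hα, hna.1 α hα]
    rw [hk]
    have hb := (ceil_half_bounds (rm R r α - r α)).1
    simp only [k1]
    omega
  · intro α hα β hβ hγ
    have hkey := rm_key hR r hna hα hβ hγ
    have h1 := (ceil_half_bounds (rm R r α - r α)).1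
    have h2 := (ceil_half_bounds (rm R r β - r β)).1
    have h3 := (ceil_half_bounds (rm R r (α + β) - r (α + β))).2
    simp only [k1]
    omega
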